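/- arXiv:cs/9906031 — 7 statements merged into one kernel-verified Lean document; each statement's English description precedes it below -/
import Mathlib

section
/- If a formula A is closed under stuttering, then □A (always A) is closed under stuttering. -/
def State := String → Bool

def StSeq := ℕ → State

def drop (k : ℕ) (s : StSeq) : StSeq := fun n => s (k + n)

def stutter (s : StSeq) (i : ℕ) : StSeq := fun n => if n ≤ i then s n else s (n - 1)

def CUS (F : StSeq → Prop) : Prop := ∀ (s : StSeq) (i : ℕ), F s ↔ F (stutter s i)

def Var (a : String) : StSeq → Prop := fun s => s 0 a = true

def Not' (F : StSeq → Prop) : StSeq → Prop := fun s => ¬ F s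

def And' (F G : StSeq → Prop) : StSeq → Prop := fun s => F s ∧ G s

def Or' (F G : StSeq → Prop) : StSeq → Prop := fun s => F s ∨ G s

def Imp' (F G : StSeq → Prop) : StSeq → Prop := fun s => F s → G s

def Iff' (F G : StSeq → Prop) : StSeq → Prop := fun s => F s ↔ G s

def Next (F : StSeq → Prop) : StSeq → Prop := fun s => F (drop 1 s)

def Always (F : StSeq → Prop) : StSeq → Prop := fun s => ∀ k, F (drop k s)

def Ev (F : StSeq → Prop) : StSeq → Prop := fun s => ∃ k, F (drop k s)

def Until' (F G : StSeq → Prop) : StSeq → Prop :=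
  fun s => ∃ k, G (drop k s) ∧ ∀ j < k, F (drop j s)

def Up (F : StSeq → Prop) : StSeq → Prop := And' (Not' F) (Next F)

def Down (F : StSeq → Prop) : StSeq → Prop := And' F (Next (Not' F))

def AnyEdge (F : StSeq → Prop) : StSeq → Prop := Or' (Up F) (Down F)

lemma drop_stutter_le (s : StSeq) (i k : ℕ) (h : k ≤ i) :
    drop k (stutter s i) = stutter (drop k s) (i - k) := by
  funext n
  simp only [drop, stutter]
  have : n ≤ i - k ↔ k + n ≤ i := by omega
  rcases le_or_gt (k + n) i with h1 | h1
  · rw [if_pos h1, if_pos (this.mpr h1)]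
  · rw [if_neg (by omega), if_neg (by omega)]
    have e : k + n - 1 = k + (n - 1) := by omega
    rw [e]

lemma drop_stutter_gt (s : StSeq) (i k : ℕ) (h : i < k) :
    drop k (stutter s i) = drop (k - 1) s := by
  funext n
  simp only [drop, stutter]
  rw [if_neg (by omega)]
  have e : k + n - 1 = k - 1 + n := by omega
  rw [e]

theorem cus_always (A : StSeq → Prop) (hA : CUS A) : CUS (Always A) := by
  intro s i
  constructor
  · intro h k
    rcases le_or_gt k i with hk | hk
    · rw [drop_stutter_le s i k hk]
      exact (hA _ _).mp (h k)
    · rw [drop_stutter_gt s i k hk]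
      exact h (k - 1)
  · intro h k
    rcases le_or_gt k i with hk | hk
    · have := h k
      rw [drop_stutter_le s i k hk] at this
      exact (hA _ _).mpr this
    · have := h (k + 1)
      rw [drop_stutter_gt s i (k + 1) (by omega)] at this
      simpa using this
end

section
/- If a formula A is closed under stuttering, then ◇A (eventually A) is closed under stuttering. -/
theorem cus_ev (A : StSeq → Prop) (hA : CUS A) : CUS (Ev A) := by
  intro s i
  constructor
  · rintro ⟨k, hk⟩
    rcases le_or_gt k i with h | h
    · exact ⟨k, by rw [drop_stutter_le s i k h]; exact (hA _ _).mp hk⟩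
    · exact ⟨k + 1, by rw [drop_stutter_gt s i (k+1) (by omega)]; simpa using hk⟩
  · rintro ⟨k, hk⟩
    rcases le_or_gt k i with h | h
    · rw [drop_stutter_le s i k h] at hk
      exact ⟨k, (hA _ _).mpr hk⟩
    · rw [drop_stutter_gt s i k h] at hk
      exact ⟨k - 1, hk⟩
end

section
/- If formulas A and B are both closed under stuttering, then A U B (A until B) is closed under stuttering. -/
theorem cus_until (A B : StSeq → Prop) (hA : CUS A) (hB : CUS B) : CUS (Until' A B) := by
  intro s i
  constructor
  · rintro ⟨k, hBk, hAj⟩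
    rcases le_or_gt k i with hk | hk
    · refine ⟨k, ?_, ?_⟩
      · rw [drop_stutter_le s i k hk]; exact (hB _ _).mp hBk
      · intro j hj
        rw [drop_stutter_le s i j (by omega)]
        exact (hA _ _).mp (hAj j hj)
    · refine ⟨k + 1, ?_, ?_⟩
      · rw [drop_stutter_gt s i (k+1) (by omega)]
        simpa using hBk
      · intro j hj
        rcases le_or_gt j i with hji | hji
        · rw [drop_stutter_le s i j hji]
          exact (hA _ _).mp (hAj j (by omega))
        · rw [drop_stutter_gt s i j hji]
          exact hAj (j - 1) (by omega)
  · rintro ⟨k, hBk, hAj⟩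
    rcases le_or_gt k i with hk | hk
    · refine ⟨k, ?_, ?_⟩
      · rw [drop_stutter_le s i k hk] at hBk; exact (hB _ _).mpr hBk
      · intro j hj
        have := hAj j hj
        rw [drop_stutter_le s i j (by omega)] at this
        exact (hA _ _).mpr this
    · refine ⟨k - 1, ?_, ?_⟩
      · rw [drop_stutter_gt s i k hk] at hBk; exact hBk
      · intro j hj
        rcases le_or_gt j i with hji | hji
        · have := hAj j (by omega)
          rw [drop_stutter_le s i j hji] at this
          exact (hA _ _).mpr this
        · have := hAj (j + 1) (by omega)
          rw [drop_stutter_gt s i (j+1) (by omega)] at this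
          simpa using this
end

section
/- If A and B are closed under stuttering, then ◇(¬A ∧ ○A ∧ ○B) is closed under stuttering. -/
lemma drop_drop (j k : ℕ) (s : StSeq) : drop j (drop k s) = drop (k + j) s := by
  funext n; simp only [drop]; rw [show k + j + n = k + (j + n) from by omega]

theorem main_theorem (A B : StSeq → Prop) (hA : CUS A) (hB : CUS B) :
    CUS (Ev (And' (Not' A) (And' (Next A) (Next B)))) := by
  intro s i
  constructor
  · rintro ⟨k, hnA, hA1, hB1⟩
    rcases lt_trichotomy k i with hk | hk | hk
    · refine ⟨k, ?_, ?_, ?_⟩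
      · rw [drop_stutter_le s i k (le_of_lt hk)]
        exact fun h => hnA ((hA (drop k s) (i - k)).mpr h)
      · show A (drop 1 (drop k (stutter s i)))
        rw [drop_stutter_le s i k (le_of_lt hk),
          drop_stutter_le (drop k s) (i - k) 1 (by omega)]
        exact (hA _ _).mp hA1
      · show B (drop 1 (drop k (stutter s i)))
        rw [drop_stutter_le s i k (le_of_lt hk),
          drop_stutter_le (drop k s) (i - k) 1 (by omega)]
        exact (hB _ _).mp hB1
    · subst hk
      refine ⟨k + 1, ?_, ?_, ?_⟩
      · rw [drop_stutter_gt s k (k + 1) (by omega)]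
        simpa using hnA
      · show A (drop 1 (drop (k + 1) (stutter s k)))
        rw [drop_stutter_gt s k (k + 1) (by omega)]
        simpa using (show A (drop 1 (drop k s)) from hA1)
      · show B (drop 1 (drop (k + 1) (stutter s k)))
        rw [drop_stutter_gt s k (k + 1) (by omega)]
        simpa using (show B (drop 1 (drop k s)) from hB1)
    · refine ⟨k + 1, ?_, ?_, ?_⟩
      · rw [drop_stutter_gt s i (k + 1) (by omega)]
        simpa using hnA
      · show A (drop 1 (drop (k + 1) (stutter s i)))
        rw [drop_stutter_gt s i (k + 1) (by omega)]
        simpa using (show A (drop 1 (drop k s)) from hA1)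
      · show B (drop 1 (drop (k + 1) (stutter s i)))
        rw [drop_stutter_gt s i (k + 1) (by omega)]
        simpa using (show B (drop 1 (drop k s)) from hB1)
  · rintro ⟨k, hnA, hA1, hB1⟩
    rcases le_or_gt k i with hk | hk
    · rcases eq_or_lt_of_le hk with hk' | hk'
      · -- k = i : contradiction
        exfalso
        subst hk'
        rw [drop_stutter_le s k k le_rfl, Nat.sub_self] at hnA
        replace hA1 : A (drop 1 (drop k (stutter s k))) := hA1
        rw [drop_drop, drop_stutter_gt s k (k + 1) (by omega)] at hA1
        simp only [Nat.add_sub_cancel] at hA1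
        exact hnA ((hA (drop k s) 0).mp hA1)
      · refine ⟨k, ?_, ?_, ?_⟩
        · rw [drop_stutter_le s i k hk] at hnA
          exact fun h => hnA ((hA (drop k s) (i - k)).mp h)
        · replace hA1 : A (drop 1 (drop k (stutter s i))) := hA1
          rw [drop_stutter_le s i k hk,
            drop_stutter_le (drop k s) (i - k) 1 (by omega)] at hA1
          exact (hA _ _).mpr hA1
        · replace hB1 : B (drop 1 (drop k (stutter s i))) := hB1
          rw [drop_stutter_le s i k hk,
            drop_stutter_le (drop k s) (i - k) 1 (by omega)] at hB1
          exact (hB _ _).mpr hB1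
    · refine ⟨k - 1, ?_, ?_, ?_⟩
      · rwa [drop_stutter_gt s i k hk] at hnA
      · replace hA1 : A (drop 1 (drop k (stutter s i))) := hA1
        rw [drop_stutter_gt s i k hk] at hA1
        exact hA1
      · replace hB1 : B (drop 1 (drop k (stutter s i))) := hB1
        rw [drop_stutter_gt s i k hk] at hB1
        exact hB1
end

section
/- If A, B, and C are closed under stuttering, then ◇(↑A ∧ ○B ∧ C) is closed under stuttering, where ↑A := ¬A ∧ ○A. -/
theorem prop1 (A B C : StSeq → Prop) (hA : CUS A) (hB : CUS B) (hC : CUS C) :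
    CUS (Ev (And' (Up A) (And' (Next B) C))) := by
  have dsle : ∀ (s : StSeq) (i k : ℕ), k ≤ i →
      drop k (stutter s i) = stutter (drop k s) (i - k) := by
    intro s i k hk
    funext n
    simp only [drop, stutter]
    rcases le_or_gt (k + n) i with h | h
    · rw [if_pos h, if_pos (show n ≤ i - k by omega)]
    · rw [if_neg (show ¬ k + n ≤ i by omega), if_neg (show ¬ n ≤ i - k by omega),
        show k + n - 1 = k + (n - 1) from by omega]
  have dsgt : ∀ (s : StSeq) (i k : ℕ), i < k →
      drop k (stutter s i) = drop (k - 1) s := by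
    intro s i k hk
    funext n
    simp only [drop, stutter]
    rw [if_neg (show ¬ k + n ≤ i by omega), show k + n - 1 = k - 1 + n from by omega]
  intro s i
  simp only [Ev, And', Up, Not', Next]
  constructor
  · rintro ⟨k, ⟨hna, ha⟩, hb, hc⟩
    by_cases hk : k < i
    · refine ⟨k, ?_⟩
      rw [dsle s i k hk.le]
      set t := drop k s with ht
      set m := i - k with hm
      have hd : drop 1 (stutter t m) = stutter (drop 1 t) (m - 1) :=
        dsle t m 1 (by omega)
      refine ⟨⟨fun h' => hna ((hA t m).mpr h'), ?_⟩, ?_, (hC t m).mp hc⟩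
      · rw [hd]; exact (hA (drop 1 t) (m - 1)).mp ha
      · rw [hd]; exact (hB (drop 1 t) (m - 1)).mp hb
    · refine ⟨k + 1, ?_⟩
      rw [dsgt s i (k + 1) (by omega)]
      simpa using ⟨⟨hna, ha⟩, hb, hc⟩
  · rintro ⟨k, ⟨hna, ha⟩, hb, hc⟩
    rcases lt_trichotomy k i with hk | hk | hk
    · rw [dsle s i k hk.le] at hna ha hb hc
      set t := drop k s with ht
      set m := i - k with hm
      have hd : drop 1 (stutter t m) = stutter (drop 1 t) (m - 1) :=
        dsle t m 1 (by omega)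
      rw [hd] at ha hb
      exact ⟨k, ⟨fun h' => hna ((hA t m).mp h'), (hA (drop 1 t) (m - 1)).mpr ha⟩,
        (hB (drop 1 t) (m - 1)).mpr hb, (hC t m).mpr hc⟩
    · subst hk
      rw [dsle s k k le_rfl, Nat.sub_self] at hna ha
      set t := drop k s with ht
      have hd : drop 1 (stutter t 0) = t := by
        rw [dsgt t 0 1 (by omega)]
        funext n; simp [drop]
      rw [hd] at ha
      exact absurd ha (fun h' => hna ((hA t 0).mp h'))
    · refine ⟨k - 1, ?_⟩
      rw [dsgt s i k hk] at hna ha hb hc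
      exact ⟨⟨hna, ha⟩, hb, hc⟩
end

section
/- If A and B are closed under stuttering, then ◇(↑A ∧ ○B) is closed under stuttering, where ↑A := ¬A ∧ ○A. -/
lemma drop_one_stutter_zero (s : StSeq) : drop 1 (stutter s 0) = s := by
  funext n
  show (if 1 + n ≤ 0 then s (1 + n) else s (1 + n - 1)) = s n
  rw [if_neg (by omega)]
  have hh : 1 + n - 1 = n := by omega
  rw [hh]

lemma drop_one_stutter_succ (s : StSeq) (j : ℕ) :
    drop 1 (stutter s (j + 1)) = stutter (drop 1 s) j := by
  have h := drop_stutter_le s (j + 1) 1 (by omega)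
  simpa using h

theorem prop1_simple2 (A B : StSeq → Prop) (hA : CUS A) (hB : CUS B) :
    CUS (Ev (And' (Up A) (Next B))) := by
  intro s i
  simp only [Ev, And', Up, Not', Next]
  constructor
  · rintro ⟨k, ⟨hnA, hAn⟩, hBn⟩
    by_cases hk : i < k + 1
    · refine ⟨k + 1, ?_⟩
      have he : drop (k + 1) (stutter s i) = drop k s := by
        simpa using drop_stutter_gt s i (k + 1) hk
      rw [he]
      exact ⟨⟨hnA, hAn⟩, hBn⟩
    · have hki : k ≤ i := by omega
      refine ⟨k, ?_⟩
      rw [drop_stutter_le s i k hki]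
      set t := drop k s with ht
      obtain ⟨j, hj⟩ : ∃ j, i - k = j + 1 := ⟨i - k - 1, by omega⟩
      rw [hj, drop_one_stutter_succ]
      exact ⟨⟨fun h => hnA ((hA t (j + 1)).mpr h), (hA (drop 1 t) j).mp hAn⟩,
        (hB (drop 1 t) j).mp hBn⟩
  · rintro ⟨k, ⟨hnA, hAn⟩, hBn⟩
    by_cases hk : i < k
    · refine ⟨k - 1, ?_⟩
      rw [drop_stutter_gt s i k hk] at hnA hAn hBn
      exact ⟨⟨hnA, hAn⟩, hBn⟩
    · have hki : k ≤ i := by omega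
      rw [drop_stutter_le s i k hki] at hnA hAn hBn
      set t := drop k s with ht
      rcases Nat.eq_zero_or_pos (i - k) with h0 | hpos
      · rw [h0, drop_one_stutter_zero] at hAn
        rw [h0] at hnA
        exact absurd ((hA t 0).mp hAn) hnA
      · obtain ⟨j, hj⟩ : ∃ j, i - k = j + 1 := ⟨i - k - 1, by omega⟩
        rw [hj] at hnA hAn hBn
        rw [drop_one_stutter_succ] at hAn hBn
        exact ⟨k, ⟨fun h => hnA ((hA t (j + 1)).mp h), (hA (drop 1 t) j).mpr hAn⟩,
          (hB (drop 1 t) j).mpr hBn⟩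
end

section
/- If A, B, and C are closed under stuttering, then □(↑A ⇒ ○B ∨ C) is closed under stuttering, where ↑A := ¬A ∧ ○A. -/
lemma drop_zero (s : StSeq) : drop 0 s = s := by
  funext n; simp [drop]

lemma key (A B C : StSeq → Prop) (hA : CUS A) (hB : CUS B) (hC : CUS C)
    (s : StSeq) (j : ℕ) (hj : 1 ≤ j) :
    (Imp' (Up A) (Or' (Next B) C)) s ↔
      (Imp' (Up A) (Or' (Next B) C)) (stutter s j) := by
  have hd : drop 1 (stutter s j) = stutter (drop 1 s) (j - 1) :=
    drop_stutter_le s j 1 hj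
  simp only [Imp', Up, And', Not', Next, Or', hd]
  rw [← hA s j, ← hA (drop 1 s) (j - 1), ← hB (drop 1 s) (j - 1), ← hC s j]

theorem prop2 (A B C : StSeq → Prop) (hA : CUS A) (hB : CUS B) (hC : CUS C) :
    CUS (Always (Imp' (Up A) (Or' (Next B) C))) := by
  intro s i
  constructor
  · intro hs k
    rcases le_or_gt k i with hk | hk
    · rw [drop_stutter_le s i k hk]
      rcases Nat.eq_zero_or_pos (i - k) with h0 | h1
      · -- stutter at 0: Up A is false
        rw [h0]
        intro hup
        exfalso
        have hd : drop 1 (stutter (drop k s) 0) = drop k s := by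
          rw [drop_stutter_gt _ 0 1 (by omega), drop_zero]
        obtain ⟨hn, hnx⟩ := hup
        simp only [Next] at hnx
        rw [hd] at hnx
        exact hn ((hA (drop k s) 0).mp hnx)
      · rw [← key A B C hA hB hC (drop k s) (i - k) h1]
        exact hs k
    · rw [drop_stutter_gt s i k hk]
      exact hs (k - 1)
  · intro hs k
    rcases lt_or_ge k i with hk | hk
    · have h1 : 1 ≤ i - k := by omega
      have := hs k
      rw [drop_stutter_le s i k (by omega)] at this
      exact (key A B C hA hB hC (drop k s) (i - k) h1).mpr this
    · have := hs (k + 1)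
      rw [drop_stutter_gt s i (k + 1) (by omega)] at this
      simpa using this
end
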